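/- Let E be a real inner product space and f : E → ℝ a differentiable function whose gradient is affine Lipschitz with constants L ≥ 0 and c ≥ 0, i.e., ‖∇f(w₂) − ∇f(w₁)‖ ≤ L‖w₂ − w₁‖ + c for all w₁, w₂ ∈ E. Then for all w₁, w₂ ∈ E: f(w₂) − f(w₁) ≤ ⟪∇f(w₁), w₂ − w₁⟫ + (L/2)‖w₂ − w₁‖² + c·‖w₂ − w₁‖. -/

import Mathlib

open RealInnerProductSpace

/-- Descent-lemma-type upper bound for a differentiable function whose gradient is
affine Lipschitz with constants `(L, c)`:
`f w₂ − f w₁ ≤ ⟪∇f(w₁), w₂ − w₁⟫ + (L/2)‖w₂ − w₁‖² + c‖w₂ − w₁‖`. -/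
theorem descent_lemma_affine_lipschitz_gradient
    {E : Type*} [NormedAddCommGroup E] [InnerProductSpace ℝ E] [CompleteSpace E]
    (f : E → ℝ) (g : E → E) (L c : ℝ) (hL : 0 ≤ L) (hc : 0 ≤ c)
    (hgrad : ∀ w : E, HasGradientAt f (g w) w)
    (haff : ∀ w₁ w₂ : E, ‖g w₂ - g w₁‖ ≤ L * ‖w₂ - w₁‖ + c) :
    ∀ w₁ w₂ : E,
      f w₂ - f w₁ ≤ ⟪g w₁, w₂ - w₁⟫ + L / 2 * ‖w₂ - w₁‖ ^ 2 + c * ‖w₂ - w₁‖ := by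
  intro w₁ w₂
  set v : E := w₂ - w₁ with hv
  set h : ℝ → ℝ := fun t =>
    f (w₁ + t • v) - t * ⟪g w₁, v⟫ - L / 2 * t ^ 2 * ‖v‖ ^ 2 - c * t * ‖v‖ with hh
  have hderiv : ∀ t : ℝ, HasDerivAt h
      (⟪g (w₁ + t • v), v⟫ - ⟪g w₁, v⟫ - L * t * ‖v‖ ^ 2 - c * ‖v‖) t := by
    intro t
    have hγ : HasDerivAt (fun s : ℝ => w₁ + s • v) v t := by
      simpa using ((hasDerivAt_id t).smul_const v).const_add w₁
    have hf := ((hgrad (w₁ + t • v)).hasFDerivAt.comp_hasDerivAt t hγ)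
    have hphi : HasDerivAt (fun s : ℝ => f (w₁ + s • v)) ⟪g (w₁ + t • v), v⟫ t := by
      simpa [InnerProductSpace.toDual_apply_apply, Function.comp_def] using hf
    have h1 : HasDerivAt (fun s : ℝ => s * ⟪g w₁, v⟫) ⟪g w₁, v⟫ t := by
      simpa using (hasDerivAt_id t).mul_const (⟪g w₁, v⟫ : ℝ)
    have h2 : HasDerivAt (fun s : ℝ => L / 2 * s ^ 2 * ‖v‖ ^ 2) (L * t * ‖v‖ ^ 2) t := by
      have := ((hasDerivAt_pow 2 t).const_mul (L / 2)).mul_const (‖v‖ ^ 2)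
      apply this.congr_deriv
      ring
    have h3 : HasDerivAt (fun s : ℝ => c * s * ‖v‖) (c * ‖v‖) t := by
      have := ((hasDerivAt_id t).const_mul c).mul_const ‖v‖
      simpa using this
    exact ((hphi.sub h1).sub h2).sub h3
  have hanti : AntitoneOn h (Set.Icc (0:ℝ) 1) := by
    apply antitoneOn_of_deriv_nonpos (convex_Icc 0 1)
    · exact fun t _ => (hderiv t).differentiableAt.continuousAt.continuousWithinAt
    · intro t ht
      exact (hderiv t).differentiableAt.differentiableWithinAt
    · intro t ht
      rw [interior_Icc] at ht
      rw [(hderiv t).deriv]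
      have hCS : ⟪g (w₁ + t • v) - g w₁, v⟫ ≤ ‖g (w₁ + t • v) - g w₁‖ * ‖v‖ :=
        real_inner_le_norm _ _
      have hb : ‖g (w₁ + t • v) - g w₁‖ ≤ L * (t * ‖v‖) + c := by
        have := haff w₁ (w₁ + t • v)
        simpa [norm_smul, abs_of_nonneg ht.1.le] using this
      have hineq : ⟪g (w₁ + t • v), v⟫ - ⟪g w₁, v⟫ ≤ (L * (t * ‖v‖) + c) * ‖v‖ := by
        rw [← inner_sub_left]
        exact hCS.trans (by
          have := mul_le_mul_of_nonneg_right hb (norm_nonneg v)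
          linarith)
      nlinarith [norm_nonneg v]
  have h01 := hanti (by norm_num : (0:ℝ) ∈ Set.Icc (0:ℝ) 1)
      (by norm_num : (1:ℝ) ∈ Set.Icc (0:ℝ) 1) zero_le_one
  simp only [hh] at h01
  norm_num at h01
  have hvw : w₁ + v = w₂ := by simp [hv]
  rw [hvw] at h01
  linarith
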